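/- For every t ≥ 1 and every x ∈ K, one step of mirror descent over K satisfies ⟨x_{t−1} − x, Aᵀ y_{t−1}⟩ ≤ (1/ρ_t)·( D(x, x_{t−1}) − D(x, x_t) ) + ρ_t R²/2. -/

import Mathlib

open scoped RealInnerProductSpace
open Finset

noncomputable section

/-- `y` is a subgradient of `f` at `z`. -/
def IsSubgrad {n : ℕ} (f : EuclideanSpace ℝ (Fin n) → ℝ)
    (z y : EuclideanSpace ℝ (Fin n)) : Prop :=
  ∀ z', f z + ⟪y, z' - z⟫ ≤ f z'

/-- Bregman divergence of a differentiable function `h` with gradient `h'`. -/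
def Dbreg {p : ℕ} (h : EuclideanSpace ℝ (Fin p) → ℝ)
    (h' : EuclideanSpace ℝ (Fin p) → EuclideanSpace ℝ (Fin p))
    (x₁ x₂ : EuclideanSpace ℝ (Fin p)) : ℝ :=
  h x₁ - h x₂ - ⟪x₁ - x₂, h' x₂⟫

/-- Fenchel conjugate of `f`, with values in `EReal`. -/
def fstarE {n : ℕ} (f : EuclideanSpace ℝ (Fin n) → ℝ)
    (y : EuclideanSpace ℝ (Fin n)) : EReal :=
  ⨆ z, ((⟪y, z⟫ - f z : ℝ) : EReal)

open Filter Topology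

section Helpers

variable {E : Type*} [NormedAddCommGroup E] [InnerProductSpace ℝ E]

lemma deriv_le_of_slope (ψ : ℝ → ℝ) (d c : ℝ) (hψ : HasDerivAt ψ d 0)
    (hle : ∀ s ∈ Set.Ioc (0:ℝ) 1, ψ s - ψ 0 ≤ s * c) : d ≤ c := by
  rw [hasDerivAt_iff_tendsto_slope] at hψ
  have h1 : Tendsto (slope ψ 0) (𝓝[>] 0) (𝓝 d) :=
    hψ.mono_left (nhdsWithin_mono _ fun s hs => ne_of_gt hs)
  refine le_of_tendsto h1 ?_
  filter_upwards [Ioc_mem_nhdsGT_of_mem (by constructor <;> norm_num : (0:ℝ) ∈ Set.Ico 0 1)]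
    with s hs
  have hs0 : (0:ℝ) < s := hs.1
  rw [slope_def_field]
  have := hle s hs
  rw [sub_zero, div_le_iff₀ hs0]
  linarith

lemma deriv_nonneg_of_min (ψ : ℝ → ℝ) (d : ℝ) (hψ : HasDerivAt ψ d 0)
    (hge : ∀ s ∈ Set.Ioc (0:ℝ) 1, ψ 0 ≤ ψ s) : 0 ≤ d := by
  by_contra hd
  push_neg at hd
  have := deriv_le_of_slope (fun s => -ψ s) (-d) 0 hψ.neg
    (fun s hs => by have := hge s hs; simp; nlinarith [hs.1])
  linarith

lemma line_hasDerivAt (a v : E) : HasDerivAt (fun s : ℝ => a + s • v) v 0 := by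
  simpa using ((hasDerivAt_id (0:ℝ)).smul_const v).const_add a

lemma line_mem_convex {K : Set E} (hK : Convex ℝ K) {a b : E} (ha : a ∈ K) (hb : b ∈ K)
    {s : ℝ} (hs : s ∈ Set.Ioc (0:ℝ) 1) : a + s • (b - a) ∈ K := by
  have := hK ha hb (by linarith [hs.2] : (0:ℝ) ≤ 1 - s) (le_of_lt hs.1) (by ring)
  convert this using 1
  module

lemma grad_min (φ : E → ℝ) (L : E →L[ℝ] ℝ) (K : Set E) (hK : Convex ℝ K) (a b : E)
    (ha : a ∈ K) (hb : b ∈ K) (hL : HasFDerivAt φ L a)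
    (hmin : ∀ z ∈ K, φ a ≤ φ z) : 0 ≤ L (b - a) := by
  have hline := line_hasDerivAt a (b - a)
  have hL' : HasFDerivAt φ L ((fun s : ℝ => a + s • (b - a)) 0) := by simpa using hL
  have hψ : HasDerivAt (fun s : ℝ => φ (a + s • (b - a))) (L (b - a)) 0 :=
    hL'.comp_hasDerivAt 0 hline
  refine deriv_nonneg_of_min _ _ hψ fun s hs => ?_
  simpa using hmin _ (line_mem_convex hK ha hb hs)

lemma convex_grad_le (q : E → ℝ) (L : E →L[ℝ] ℝ) (a b : E) (hq : ConvexOn ℝ Set.univ q)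
    (hL : HasFDerivAt q L b) : L (a - b) ≤ q a - q b := by
  have hline := line_hasDerivAt b (a - b)
  have hL' : HasFDerivAt q L ((fun s : ℝ => b + s • (a - b)) 0) := by simpa using hL
  have hψ : HasDerivAt (fun s : ℝ => q (b + s • (a - b))) (L (a - b)) 0 :=
    hL'.comp_hasDerivAt 0 hline
  refine deriv_le_of_slope _ _ _ hψ fun s hs => ?_
  have hmem : b + s • (a - b) = (1 - s) • b + s • a := by module
  have := hq.2 (Set.mem_univ b) (Set.mem_univ a)
    (by linarith [hs.2] : (0:ℝ) ≤ 1 - s) (le_of_lt hs.1) (by ring)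
  rw [hmem]
  simp only [zero_smul, add_zero, smul_eq_mul] at this ⊢
  nlinarith [this]

lemma inner_line_hasFDerivAt (w c z : E) :
    HasFDerivAt (fun z : E => ⟪z - c, w⟫) (innerSL ℝ w) z := by
  have heq : (fun z : E => ⟪z - c, w⟫) = fun z : E => (innerSL ℝ w) z - ⟪w, c⟫ := by
    funext z
    simp [innerSL_apply_apply, real_inner_comm, inner_sub_left]
  rw [heq]
  exact (innerSL ℝ w).hasFDerivAt.sub_const _

lemma bregman_lower [CompleteSpace E] (h : E → ℝ) (h' : E → E)
    (hdiff : ∀ x, HasGradientAt h (h' x) x)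
    (hsc : StrongConvexOn Set.univ 1 h) (a b : E) :
    ‖a - b‖ ^ 2 / 2 ≤ h a - h b - ⟪a - b, h' b⟫ := by
  set q : E → ℝ := fun z => h z - 1 / 2 * ‖z‖ ^ 2 with hq_def
  have hq : ConvexOn ℝ Set.univ q := by
    have := strongConvexOn_iff_convex.mp hsc
    simpa [hq_def] using this
  have hh : HasFDerivAt h (InnerProductSpace.toDual ℝ E (h' b)) b :=
    hasGradientAt_iff_hasFDerivAt.mp (hdiff b)
  have hnorm : HasFDerivAt (fun z : E => (1:ℝ) / 2 * ‖z‖ ^ 2)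
      ((1/2 : ℝ) • (2 • (innerSL ℝ b))) b :=
    (hasStrictFDerivAt_norm_sq b).hasFDerivAt.const_mul (1/2)
  have hL : HasFDerivAt q (InnerProductSpace.toDual ℝ E (h' b) -
      (1/2 : ℝ) • (2 • (innerSL ℝ b))) b := hh.sub hnorm
  have key := convex_grad_le q _ a b hq hL
  simp only [ContinuousLinearMap.sub_apply, ContinuousLinearMap.smul_apply,
    InnerProductSpace.toDual_apply_apply, innerSL_apply_apply, smul_eq_mul, nsmul_eq_mul, hq_def] at key
  have h1 : ⟪h' b, a - b⟫ = ⟪a - b, h' b⟫ := real_inner_comm _ _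
  have h2 : ‖a - b‖ ^ 2 = ‖a‖ ^ 2 - 2 * ⟪a, b⟫ + ‖b‖ ^ 2 := by
    exact norm_sub_sq_real a b
  have h3 : ⟪b, a - b⟫ = ⟪a, b⟫ - ‖b‖ ^ 2 := by
    rw [← real_inner_self_eq_norm_sq]
    simp [inner_sub_right, real_inner_comm a b]
  nlinarith [key]

end Helpers

/-- One step of mirror descent over a compact convex set `K`. -/
theorem mirror_descent_over_K_one_step {p n : ℕ}
    (A : EuclideanSpace ℝ (Fin p) →L[ℝ] EuclideanSpace ℝ (Fin n))
    (f : EuclideanSpace ℝ (Fin n) → ℝ)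
    (hf : ConvexOn ℝ Set.univ f)
    (K : Set (EuclideanSpace ℝ (Fin p)))
    (hKcpt : IsCompact K) (hKconv : Convex ℝ K)
    (h : EuclideanSpace ℝ (Fin p) → ℝ)
    (h' : EuclideanSpace ℝ (Fin p) → EuclideanSpace ℝ (Fin p))
    (hdiff : ∀ x, HasGradientAt h (h' x) x)
    (hsc : StrongConvexOn Set.univ 1 h)
    (x : ℕ → EuclideanSpace ℝ (Fin p))
    (y : ℕ → EuclideanSpace ℝ (Fin n))
    (ρ : ℕ → ℝ)
    (hxK : ∀ t, x t ∈ K)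
    (hsub : ∀ t, IsSubgrad f (A (x t)) (y t))
    (hmin : ∀ t, 1 ≤ t → ∀ x' ∈ K,
      1 / ρ t * Dbreg h h' (x t) (x (t - 1)) +
          ⟪x t - x (t - 1), (ContinuousLinearMap.adjoint A) (y (t - 1))⟫ ≤
        1 / ρ t * Dbreg h h' x' (x (t - 1)) +
          ⟪x' - x (t - 1), (ContinuousLinearMap.adjoint A) (y (t - 1))⟫)
    (R : ℝ) (hR0 : 0 ≤ R)
    (hR : ∀ z y', IsSubgrad f z y' → ‖(ContinuousLinearMap.adjoint A) y'‖ ≤ R)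
    (hρpos : ∀ t, 1 ≤ t → 0 < ρ t) :
    ∀ t : ℕ, 1 ≤ t → ∀ x' ∈ K,
      ⟪x (t - 1) - x', (ContinuousLinearMap.adjoint A) (y (t - 1))⟫ ≤
        1 / ρ t * (Dbreg h h' x' (x (t - 1)) - Dbreg h h' x' (x t)) + ρ t * R ^ 2 / 2 := by
  intro t ht x' hx'
  set g : EuclideanSpace ℝ (Fin p) := (ContinuousLinearMap.adjoint A) (y (t - 1)) with hg_def
  set c : EuclideanSpace ℝ (Fin p) := x (t - 1) with hc_def
  set xt : EuclideanSpace ℝ (Fin p) := x t with hxt_def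
  have hρ : 0 < ρ t := hρpos t ht
  have hgR : ‖g‖ ≤ R := hR _ _ (hsub (t - 1))
  -- first-order optimality
  have hDb : HasFDerivAt (fun z : EuclideanSpace ℝ (Fin p) => Dbreg h h' z c)
      (InnerProductSpace.toDual ℝ (EuclideanSpace ℝ (Fin p)) (h' xt) - innerSL ℝ (h' c)) xt := by
    rw [show (fun z : EuclideanSpace ℝ (Fin p) => Dbreg h h' z c) =
        fun z : EuclideanSpace ℝ (Fin p) => (h z - h c) - ⟪z - c, h' c⟫ from rfl]
    exact ((hasGradientAt_iff_hasFDerivAt.mp (hdiff xt)).sub_const (h c)).sub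
      (inner_line_hasFDerivAt (h' c) c xt)
  have hφ : HasFDerivAt
      (fun z : EuclideanSpace ℝ (Fin p) => 1 / ρ t * Dbreg h h' z c + ⟪z - c, g⟫)
      ((1 / ρ t) • (InnerProductSpace.toDual ℝ (EuclideanSpace ℝ (Fin p)) (h' xt) - innerSL ℝ (h' c)) +
        innerSL ℝ g) xt :=
    (hDb.const_mul (1 / ρ t)).add (inner_line_hasFDerivAt g c xt)
  have key := grad_min _ _ K hKconv xt x' (hxK t) hx' hφ (fun z hz => hmin t ht z hz)
  simp only [ContinuousLinearMap.add_apply, ContinuousLinearMap.smul_apply,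
    ContinuousLinearMap.sub_apply, InnerProductSpace.toDual_apply_apply, innerSL_apply_apply,
    smul_eq_mul] at key
  -- key : 0 ≤ 1/ρt * (⟪h' xt, x' - xt⟫ - ⟪h' c, x' - xt⟫) + ⟪g, x' - xt⟫
  -- three-point identity
  have h3pt : ⟪h' xt, x' - xt⟫ - ⟪h' c, x' - xt⟫ =
      Dbreg h h' x' c - Dbreg h h' x' xt - Dbreg h h' xt c := by
    simp only [Dbreg, inner_sub_left, inner_sub_right, real_inner_comm]
    ring
  -- strong convexity bound
  have hbreg : ‖xt - c‖ ^ 2 / 2 ≤ Dbreg h h' xt c := bregman_lower h h' hdiff hsc xt c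
  -- Cauchy-Schwarz and AM-GM
  have hcs : ⟪g, c - xt⟫ ≤ ‖g‖ * ‖c - xt‖ := real_inner_le_norm _ _
  have hnn : ‖c - xt‖ = ‖xt - c‖ := norm_sub_rev _ _
  have hamgm : ‖g‖ * ‖xt - c‖ ≤ ρ t * R ^ 2 / 2 + ‖xt - c‖ ^ 2 / (2 * ρ t) := by
    have hb := norm_nonneg (xt - c)
    have h1 : ‖g‖ * ‖xt - c‖ ≤ R * ‖xt - c‖ := mul_le_mul_of_nonneg_right hgR hb
    have h2 : ρ t * R ^ 2 / 2 + ‖xt - c‖ ^ 2 / (2 * ρ t) - R * ‖xt - c‖ =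
        (ρ t * R - ‖xt - c‖) ^ 2 / (2 * ρ t) := by field_simp; ring
    have h3 : (0:ℝ) ≤ (ρ t * R - ‖xt - c‖) ^ 2 / (2 * ρ t) := by positivity
    linarith
  -- split the inner product
  have hsplit : ⟪c - x', g⟫ = ⟪g, c - xt⟫ + ⟪g, xt - x'⟫ := by
    rw [real_inner_comm, ← inner_add_right]
    congr 1
    abel
  have hkey2 : ⟪g, xt - x'⟫ ≤ 1 / ρ t *
      (Dbreg h h' x' c - Dbreg h h' x' xt - Dbreg h h' xt c) := by
    rw [← h3pt]
    have : ⟪g, xt - x'⟫ = -⟪g, x' - xt⟫ := by rw [← inner_neg_right]; congr 1; abel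
    rw [this]
    linarith [key]
  have hsc2 : ‖xt - c‖ ^ 2 / (2 * ρ t) ≤ 1 / ρ t * Dbreg h h' xt c := by
    rw [div_le_iff₀ (by positivity)]
    have h1 : 1 / ρ t * Dbreg h h' xt c * (2 * ρ t) = 2 * Dbreg h h' xt c := by
      field_simp
    rw [h1]
    linarith [hbreg]
  calc ⟪c - x', g⟫ = ⟪g, c - xt⟫ + ⟪g, xt - x'⟫ := hsplit
    _ ≤ (ρ t * R ^ 2 / 2 + ‖xt - c‖ ^ 2 / (2 * ρ t)) +
        1 / ρ t * (Dbreg h h' x' c - Dbreg h h' x' xt - Dbreg h h' xt c) := by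
        have := hcs.trans (by rw [hnn] : ‖g‖ * ‖c - xt‖ ≤ ‖g‖ * ‖xt - c‖)
        linarith [this.trans hamgm, hkey2]
    _ ≤ 1 / ρ t * (Dbreg h h' x' c - Dbreg h h' x' xt) + ρ t * R ^ 2 / 2 := by
        have hring : 1 / ρ t * (Dbreg h h' x' c - Dbreg h h' x' xt - Dbreg h h' xt c) =
            1 / ρ t * (Dbreg h h' x' c - Dbreg h h' x' xt) - 1 / ρ t * Dbreg h h' xt c := by
          ring
        linarith
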